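/- Let C : [0,1] → ℝ be continuously differentiable such that t ↦ t·C'(t) is strictly increasing on [0,1]. Let l ∈ (0, 1/6), r = 1 − 2l, c = l·r², let λ and M be as defined, and set f̂(s) = ∫₀^s λ(t)·C'(t·λ(t)) dt. Then for any real constants C_x, C_y, C_z with C_x + C_y + C_z = C(0) − 2·∫₀¹ λ(t)·C'(t·λ(t)) dt, the inequality (f̂(x) + C_x) + (f̂(y) + C_y) + (f̂(z) + C_z) ≤ C(x·y·z) holds for all (x,y,z) ∈ [0,1]³, with equality for all (x,y,z) ∈ M. -/

import Mathlib

open Set intervalIntegral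

/-- The piecewise function `λ`: `(1−2x)²` on `[0, l)`, `c/x` on `[l, r)` and `x(1−x)/2` on
`[r, 1]`, where `r = 1 − 2l` and `c = l·r²`. -/
noncomputable def lam (l : ℝ) (x : ℝ) : ℝ :=
  if x < l then (1 - 2*x)^2
  else if x < 1 - 2*l then (l * (1 - 2*l)^2) / x
  else x * (1 - x) / 2

/-- The set `M ⊆ [0,1]³`: the union of the three segments
`Mx = {(t, 1−2t, 1−2t) : 0 ≤ t ≤ l}`, `My = {(1−2t, t, 1−2t) : 0 ≤ t ≤ l}`,
`Mz = {(1−2t, 1−2t, t) : 0 ≤ t ≤ l}` and the two-dimensional piece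
`M₂ = {(x,y,z) : l ≤ x,y,z ≤ 1−2l, xyz = l(1−2l)²}`. -/
def Mset (l : ℝ) : Set (ℝ × ℝ × ℝ) :=
  {p | ∃ t, 0 ≤ t ∧ t ≤ l ∧
    (p = (t, 1 - 2*t, 1 - 2*t) ∨ p = (1 - 2*t, t, 1 - 2*t) ∨ p = (1 - 2*t, 1 - 2*t, t))} ∪
  {p | l ≤ p.1 ∧ p.1 ≤ 1 - 2*l ∧ l ≤ p.2.1 ∧ p.2.1 ≤ 1 - 2*l ∧ l ≤ p.2.2 ∧ p.2.2 ≤ 1 - 2*l ∧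
    p.1 * p.2.1 * p.2.2 = l * (1 - 2*l)^2}

/-- The potential `f̂(s) = ∫₀^s λ(t)·C'(t·λ(t)) dt`. -/
noncomputable def fhat (l : ℝ) (C' : ℝ → ℝ) (s : ℝ) : ℝ :=
  ∫ t in (0 : ℝ)..s, lam l t * C' (t * lam l t)

set_option linter.unusedSectionVars false

section LamBasic
variable {l : ℝ} (hl0 : 0 < l) (hl6 : l < 1/6)
include hl0 hl6

lemma lam_lt {x : ℝ} (h : x < l) : lam l x = (1 - 2*x)^2 := if_pos h

lemma lam_mid {x : ℝ} (h1 : l ≤ x) (h2 : x ≤ 1 - 2*l) :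
    lam l x = (l * (1 - 2*l)^2) / x := by
  unfold lam
  rw [if_neg (not_lt.2 h1)]
  rcases lt_or_eq_of_le h2 with h | h
  · rw [if_pos h]
  · rw [if_neg (not_lt.2 h.ge), h]
    have hr : (0:ℝ) < 1 - 2*l := by linarith
    field_simp
    ring

lemma lam_ge {x : ℝ} (h : 1 - 2*l ≤ x) : lam l x = x * (1 - x) / 2 := by
  unfold lam
  rw [if_neg (not_lt.2 (by linarith)), if_neg (not_lt.2 h)]

lemma lam_zero : lam l 0 = 1 := by rw [lam_lt hl0 hl6 hl0]; ring

lemma lam_one : lam l 1 = 0 := by rw [lam_ge hl0 hl6 (by linarith)]; ring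

lemma lam_nonneg {x : ℝ} (hx : x ∈ Icc (0:ℝ) 1) : 0 ≤ lam l x := by
  obtain ⟨hx0, hx1⟩ := hx
  unfold lam
  split_ifs with h1 h2
  · positivity
  · have : 0 < x := lt_of_lt_of_le hl0 (not_lt.1 h1)
    positivity
  · have : 1 - 2*l ≤ x := not_lt.1 h2
    nlinarith

lemma lam_le_one {x : ℝ} (hx : x ∈ Icc (0:ℝ) 1) : lam l x ≤ 1 := by
  obtain ⟨hx0, hx1⟩ := hx
  unfold lam
  split_ifs with h1 h2
  · nlinarith
  · have hlx : l ≤ x := not_lt.1 h1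
    have hx0' : 0 < x := lt_of_lt_of_le hl0 hlx
    rw [div_le_one hx0']
    nlinarith [mul_nonneg (mul_nonneg hl0.le hl0.le) (by linarith : (0:ℝ) ≤ 1 - l)]
  · nlinarith

lemma lam_pos {x : ℝ} (hx0 : 0 ≤ x) (hx1 : x < 1) : 0 < lam l x := by
  unfold lam
  split_ifs with h1 h2
  · nlinarith
  · have hlx : l ≤ x := not_lt.1 h1
    have hx0' : 0 < x := lt_of_lt_of_le hl0 hlx
    have : (0:ℝ) < 1 - 2*l := by linarith
    positivity
  · have : 1 - 2*l ≤ x := not_lt.1 h2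
    nlinarith

end LamBasic

section LamCont
variable {l : ℝ} (hl0 : 0 < l) (hl6 : l < 1/6)
include hl0 hl6

lemma lam_continuous : Continuous (lam l) := by
  have hlr : l < 1 - 2*l := by linarith
  have c1 : ContinuousOn (lam l) (Iic l) := by
    have : ContinuousOn (fun x : ℝ => (1 - 2*x)^2) (Iic l) := by fun_prop
    refine this.congr fun x hx => ?_
    rcases lt_or_eq_of_le (mem_Iic.1 hx) with h | h
    · exact if_pos h
    · subst h
      rw [lam_mid hl0 hl6 le_rfl (by linarith)]
      field_simp
  have c2 : ContinuousOn (lam l) (Icc l (1 - 2*l)) := by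
    have : ContinuousOn (fun x : ℝ => (l * (1 - 2*l)^2) / x) (Icc l (1 - 2*l)) := by
      apply ContinuousOn.div continuousOn_const continuousOn_id
      intro x hx
      exact ne_of_gt (lt_of_lt_of_le hl0 hx.1)
    exact this.congr fun x hx => lam_mid hl0 hl6 hx.1 hx.2
  have c3 : ContinuousOn (lam l) (Ici (1 - 2*l)) := by
    have : ContinuousOn (fun x : ℝ => x * (1 - x) / 2) (Ici (1 - 2*l)) := by fun_prop
    exact this.congr fun x hx => lam_ge hl0 hl6 hx
  rw [continuous_iff_continuousAt]
  intro x
  rw [← continuousWithinAt_univ]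
  have huniv : (univ : Set ℝ) = Iic l ∪ (Icc l (1 - 2*l) ∪ Ici (1 - 2*l)) := by
    ext t; simp only [mem_univ, mem_union, mem_Iic, mem_Icc, mem_Ici, true_iff]
    by_cases h : t ≤ l
    · left; exact h
    · right
      by_cases h2 : t ≤ 1 - 2*l
      · left; exact ⟨le_of_not_ge h, h2⟩
      · right; linarith [le_of_not_ge h2]
  rw [huniv]
  have key : ∀ s : Set ℝ, IsClosed s → ContinuousOn (lam l) s →
      ContinuousWithinAt (lam l) s x := by
    intro s hs hcont
    by_cases hx : x ∈ s
    · exact hcont.continuousWithinAt hx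
    · exact continuousWithinAt_of_notMem_closure (by rwa [hs.closure_eq])
  exact ((key _ isClosed_Iic c1).union
    ((key _ isClosed_Icc c2).union (key _ isClosed_Ici c3)))

lemma lam_strictAntiOn : StrictAntiOn (lam l) (Icc 0 1) := by
  intro a ha b hb hab
  obtain ⟨ha0, ha1⟩ := ha
  obtain ⟨hb0, hb1⟩ := hb
  have h2l : (0:ℝ) < 1 - 2*l := by linarith
  have hc0 : 0 < l * (1 - 2*l)^2 := by positivity
  rcases lt_or_ge a l with hA | hA
  · rcases lt_or_ge b l with hB | hB
    · rw [lam_lt hl0 hl6 hA, lam_lt hl0 hl6 hB]; nlinarith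
    · rcases le_or_gt b (1-2*l) with hB2 | hB2
      · rw [lam_lt hl0 hl6 hA, lam_mid hl0 hl6 hB hB2]
        have hb0' : 0 < b := lt_of_lt_of_le hl0 hB
        have : l * (1 - 2*l)^2 / b ≤ (1 - 2*l)^2 := by
          rw [div_le_iff₀ hb0']; nlinarith
        nlinarith
      · rw [lam_lt hl0 hl6 hA, lam_ge hl0 hl6 hB2.le]; nlinarith
  · have ha0' : 0 < a := lt_of_lt_of_le hl0 hA
    rcases le_or_gt b (1-2*l) with hB2 | hB2
    · have hA2 : a ≤ 1 - 2*l := by linarith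
      have hB : l ≤ b := le_trans hA hab.le
      rw [lam_mid hl0 hl6 hA hA2, lam_mid hl0 hl6 hB hB2]
      exact div_lt_div_of_pos_left hc0 ha0' hab
    · rw [lam_ge hl0 hl6 hB2.le]
      rcases le_or_gt a (1-2*l) with hA2 | hA2
      · rw [lam_mid hl0 hl6 hA hA2]
        have h1' : b * (1 - b) / 2 < l * (1 - 2*l) := by nlinarith
        have h2' : l * (1 - 2*l) ≤ l * (1 - 2*l)^2 / a := by
          rw [le_div_iff₀ ha0']; nlinarith
        linarith
      · rw [lam_ge hl0 hl6 hA2.le]; nlinarith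

end LamCont

noncomputable def clampI (u : ℝ) : ℝ := max 0 (min u 1)

lemma clampI_mem (u : ℝ) : clampI u ∈ Icc (0:ℝ) 1 :=
  ⟨le_max_left _ _, max_le (by norm_num) (min_le_right _ _)⟩

lemma clampI_eq {u : ℝ} (h : u ∈ Icc (0:ℝ) 1) : clampI u = u := by
  simp [clampI, min_eq_left h.2, max_eq_right h.1]

lemma continuous_clampI : Continuous clampI :=
  continuous_const.max (continuous_id.min continuous_const)

noncomputable def phiT (l : ℝ) (C' : ℝ → ℝ) (t : ℝ) : ℝ :=
  lam l t * C' (clampI (t * lam l t))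

noncomputable def FT (l : ℝ) (C' : ℝ → ℝ) (s : ℝ) : ℝ := ∫ t in (0:ℝ)..s, phiT l C' t

section FTsec
variable {l : ℝ} {C C' : ℝ → ℝ} (hl0 : 0 < l) (hl6 : l < 1/6)
include hl0 hl6

lemma theta_mem {x : ℝ} (hx : x ∈ Icc (0:ℝ) 1) : x * lam l x ∈ Icc (0:ℝ) 1 := by
  constructor
  · exact mul_nonneg hx.1 (lam_nonneg hl0 hl6 hx)
  · calc x * lam l x ≤ 1 * 1 :=
        mul_le_mul hx.2 (lam_le_one hl0 hl6 hx) (lam_nonneg hl0 hl6 hx) zero_le_one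
      _ = 1 := mul_one 1

lemma phiT_eq {x : ℝ} (hx : x ∈ Icc (0:ℝ) 1) :
    phiT l C' x = lam l x * C' (x * lam l x) := by
  rw [phiT, clampI_eq (theta_mem hl0 hl6 hx)]

variable (hC' : ContinuousOn C' (Icc 0 1))
include hC'

lemma continuous_phiT : Continuous (phiT l C') := by
  apply (lam_continuous hl0 hl6).mul
  apply hC'.comp_continuous
  · exact continuous_clampI.comp (continuous_id.mul (lam_continuous hl0 hl6))
  · exact fun x => clampI_mem _

lemma hasDerivAt_FT (x : ℝ) : HasDerivAt (FT l C') (phiT l C' x) x :=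
  ((continuous_phiT hl0 hl6 hC').integral_hasStrictDerivAt 0 x).hasDerivAt

lemma continuous_FT : Continuous (FT l C') :=
  continuous_iff_continuousAt.2 fun x => (hasDerivAt_FT hl0 hl6 hC' x).continuousAt

lemma fhat_eq_FT {s : ℝ} (hs : s ∈ Icc (0:ℝ) 1) : fhat l C' s = FT l C' s := by
  refine intervalIntegral.integral_congr fun t ht => ?_
  rw [uIcc_of_le hs.1] at ht
  exact (phiT_eq hl0 hl6 ⟨ht.1, le_trans ht.2 hs.2⟩).symm

lemma FT_zero : FT l C' 0 = 0 := intervalIntegral.integral_same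

end FTsec

section Paths
variable {l : ℝ} {C C' : ℝ → ℝ} (hl0 : 0 < l) (hl6 : l < 1/6)
  (hC : ∀ t ∈ Icc (0:ℝ) 1, HasDerivWithinAt C (C' t) (Icc (0:ℝ) 1) t)
  (hC' : ContinuousOn C' (Icc 0 1))
include hl0 hl6 hC hC'

lemma pmem {s : ℝ} (hs : s ∈ Icc 0 l) : s*(1-2*s)^2 ∈ Icc (0:ℝ) 1 := by
  constructor
  · exact mul_nonneg hs.1 (sq_nonneg _)
  · nlinarith [hs.1, hs.2, sq_nonneg (1-2*s)]

lemma path_const {t : ℝ} (ht : t ∈ Icc 0 l) :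
    C (t*(1-2*t)^2) - FT l C' t - 2*FT l C' (1-2*t) = C 0 - 2 * FT l C' 1 := by
  have hCc : ContinuousOn C (Icc 0 1) := fun u hu => (hC u hu).continuousWithinAt
  set h : ℝ → ℝ := fun s => C (s*(1-2*s)^2) - FT l C' s - 2*FT l C' (1-2*s) with hh
  have key : ∀ s ∈ Icc 0 l, h s = h 0 := by
    apply constant_of_has_deriv_right_zero
    · apply ContinuousOn.sub
      apply ContinuousOn.sub
      · exact hCc.comp (by fun_prop) (fun s hs => pmem hl0 hl6 hC hC' hs)
      · exact (continuous_FT hl0 hl6 hC').continuousOn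
      · exact (continuous_const.mul ((continuous_FT hl0 hl6 hC').comp
          (by fun_prop))).continuousOn
    · intro x hx
      obtain ⟨hx0, hxl⟩ := hx
      have hx1 : x ∈ Icc (0:ℝ) 1 := ⟨hx0, by linarith⟩
      have hpx : x*(1-2*x)^2 ∈ Icc (0:ℝ) 1 := pmem hl0 hl6 hC hC' ⟨hx0, hxl.le⟩
      -- derivative of the inner polynomial
      have hp : HasDerivAt (fun s : ℝ => s*(1-2*s)^2)
          ((1-2*x)^2 - 4*(x*(1-2*x))) x := by
        have h1 : HasDerivAt (fun s : ℝ => 1 - 2*s) (0 - 2*1) x :=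
          (hasDerivAt_const x (1:ℝ)).sub ((hasDerivAt_id x).const_mul 2)
        have h2 : HasDerivAt (fun s : ℝ => s*(1-2*s)^2)
            (1 * (1-2*x)^2 + x * (((2:ℕ):ℝ) * (1-2*x)^(2-1) * (0 - 2*1))) x :=
          (hasDerivAt_id x).mul (h1.pow 2)
        convert h2 using 1
        push_cast
        ring
      have hmap : MapsTo (fun s : ℝ => s*(1-2*s)^2) (Icc x l) (Icc 0 1) :=
        fun s hs => pmem hl0 hl6 hC hC' ⟨le_trans hx0 hs.1, hs.2⟩
      have hcomp : HasDerivWithinAt (fun s => C (s*(1-2*s)^2))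
          (C' (x*(1-2*x)^2) * ((1-2*x)^2 - 4*(x*(1-2*x)))) (Icc x l) x :=
        (hC _ hpx).comp x (hp.hasDerivWithinAt) hmap
      have hset : Icc x l =ᶠ[nhds x] Ici x := by
        rw [Filter.eventuallyEq_set]
        filter_upwards [Iio_mem_nhds hxl] with s hs
        simp only [mem_Icc, mem_Ici]
        exact and_iff_left (le_of_lt hs)
      have hC1 : HasDerivWithinAt (fun s => C (s*(1-2*s)^2))
          (C' (x*(1-2*x)^2) * ((1-2*x)^2 - 4*(x*(1-2*x)))) (Ici x) x :=
        hcomp.congr_set hset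
      have hlin : HasDerivAt (fun s : ℝ => 1 - 2*s) (-2) x := by
        simpa using ((hasDerivAt_id x).const_mul (2:ℝ)).const_sub (1:ℝ)
      have hF2 : HasDerivAt (fun s : ℝ => FT l C' (1-2*s)) (phiT l C' (1-2*x) * (-2)) x :=
        by have := (hasDerivAt_FT hl0 hl6 hC' (1-2*x)).comp x hlin; exact this
      have total : HasDerivWithinAt h
          (C' (x*(1-2*x)^2) * ((1-2*x)^2 - 4*(x*(1-2*x))) - phiT l C' x -
            2*(phiT l C' (1-2*x) * (-2))) (Ici x) x :=
        (hC1.sub ((hasDerivAt_FT hl0 hl6 hC' x).hasDerivWithinAt)).sub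
          (hF2.hasDerivWithinAt.const_mul 2)
      have hval : C' (x*(1-2*x)^2) * ((1-2*x)^2 - 4*(x*(1-2*x))) - phiT l C' x -
          2*(phiT l C' (1-2*x) * (-2)) = 0 := by
        have e1 : phiT l C' x = (1-2*x)^2 * C' (x*(1-2*x)^2) := by
          rw [phiT_eq hl0 hl6 hx1, lam_lt hl0 hl6 hxl]
        have h2x : (1-2*x) ∈ Icc (0:ℝ) 1 := ⟨by linarith, by linarith⟩
        have e2 : phiT l C' (1-2*x) = ((1-2*x)*(1-(1-2*x))/2) * C' (x*(1-2*x)^2) := by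
          rw [phiT_eq hl0 hl6 h2x, lam_ge hl0 hl6 (by linarith)]
          congr 1
          ring
        rw [e1, e2]
        ring
      exact hval ▸ total
  have h0 : h 0 = C 0 - 2 * FT l C' 1 := by
    simp only [hh]
    rw [FT_zero hl0 hl6 hC']
    norm_num
  rw [← h0]
  exact key t ht

end Paths

section Hyp
variable {l : ℝ} {C C' : ℝ → ℝ} (hl0 : 0 < l) (hl6 : l < 1/6)
  (hC' : ContinuousOn C' (Icc 0 1))
include hl0 hl6 hC'

lemma c_mem : l * (1-2*l)^2 ∈ Icc (0:ℝ) 1 := by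
  constructor
  · positivity
  · nlinarith [sq_nonneg (1-2*l)]

lemma phiT_mid {x : ℝ} (hx1 : l ≤ x) (hx2 : x ≤ 1-2*l) :
    phiT l C' x = (l * (1-2*l)^2 / x) * C' (l * (1-2*l)^2) := by
  have hx0 : 0 < x := lt_of_lt_of_le hl0 hx1
  rw [phiT, lam_mid hl0 hl6 hx1 hx2, mul_div_cancel₀ _ (ne_of_gt hx0),
    clampI_eq (c_mem hl0 hl6 hC')]

lemma FT_hyp {u v u' v' : ℝ} (hu : u ∈ Icc l (1-2*l)) (hv : v ∈ Icc l (1-2*l))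
    (hu' : u' ∈ Icc l (1-2*l)) (hv' : v' ∈ Icc l (1-2*l)) (huv : u * v = u' * v') :
    FT l C' u + FT l C' v = FT l C' u' + FT l C' v' := by
  have hr0 : (0:ℝ) < 1 - 2*l := by linarith
  set k := u * v with hk
  have hk0 : 0 < k := mul_pos (lt_of_lt_of_le hl0 hu.1) (lt_of_lt_of_le hl0 hv.1)
  set a := max l (k/(1-2*l)) with ha
  set b := min (1-2*l) (k/l) with hb
  have ha0 : 0 < a := lt_of_lt_of_le hl0 (le_max_left _ _)
  have hmem : ∀ s : ℝ, s ∈ Icc a b → (l ≤ s ∧ s ≤ 1-2*l ∧ l ≤ k/s ∧ k/s ≤ 1-2*l) := by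
    intro s hs
    have hs1 : l ≤ s := le_trans (le_max_left _ _) hs.1
    have hs0 : 0 < s := lt_of_lt_of_le hl0 hs1
    have hs2 : s ≤ 1-2*l := le_trans hs.2 (min_le_left _ _)
    refine ⟨hs1, hs2, ?_, ?_⟩
    · rw [le_div_iff₀ hs0]
      have := le_trans hs.2 (min_le_right _ _)
      rw [le_div_iff₀ hl0] at this
      linarith [this]
    · rw [div_le_iff₀ hs0]
      have := le_trans (le_max_right l (k/(1-2*l))) hs.1
      rw [div_le_iff₀ hr0] at this
      linarith [this]
    
  have key : ∀ s ∈ Icc a b, FT l C' s + FT l C' (k/s) = FT l C' a + FT l C' (k/a) := by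
    apply constant_of_has_deriv_right_zero
    · apply ContinuousOn.add
      · exact (continuous_FT hl0 hl6 hC').continuousOn
      · apply (continuous_FT hl0 hl6 hC').comp_continuousOn
        apply ContinuousOn.div continuousOn_const continuousOn_id
        intro s hs
        exact ne_of_gt (lt_of_lt_of_le hl0 (le_trans (le_max_left _ _) hs.1))
    · intro x hx
      have hx' := hmem x ⟨hx.1, hx.2.le⟩
      obtain ⟨hxl, hxr, hkxl, hkxr⟩ := hx'
      have hx0 : 0 < x := lt_of_lt_of_le hl0 hxl
      have hdiv : HasDerivAt (fun s : ℝ => k / s) (-(k / x^2)) x := by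
        have h1 : HasDerivAt (fun s : ℝ => k * s⁻¹) (k * -(x^2)⁻¹) x :=
          (hasDerivAt_inv (ne_of_gt hx0)).const_mul k
        have : (fun s : ℝ => k / s) = fun s : ℝ => k * s⁻¹ := by
          funext s; rw [div_eq_mul_inv]
        rw [this]
        convert h1 using 1
        field_simp
      have hG : HasDerivAt (fun s : ℝ => FT l C' s + FT l C' (k/s))
          (phiT l C' x + phiT l C' (k/x) * (-(k / x^2))) x :=
        (hasDerivAt_FT hl0 hl6 hC' x).add
          (((hasDerivAt_FT hl0 hl6 hC' (k/x)).comp x hdiv))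
      have hval : phiT l C' x + phiT l C' (k/x) * (-(k / x^2)) = 0 := by
        rw [phiT_mid hl0 hl6 hC' hxl hxr, phiT_mid hl0 hl6 hC' hkxl hkxr]
        have hkx0 : k / x ≠ 0 := ne_of_gt (lt_of_lt_of_le hl0 hkxl)
        field_simp
        ring
      exact hval ▸ hG.hasDerivWithinAt
  have hmemu : u ∈ Icc a b := by
    have hu0 : 0 ≤ u := le_trans hl0.le hu.1
    constructor
    · apply max_le hu.1
      rw [div_le_iff₀ hr0, hk]
      exact mul_le_mul_of_nonneg_left hv.2 hu0
    · apply le_min hu.2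
      rw [le_div_iff₀ hl0, hk]
      exact mul_le_mul_of_nonneg_left hv.1 hu0
  have hmemu' : u' ∈ Icc a b := by
    have hu0 : 0 ≤ u' := le_trans hl0.le hu'.1
    constructor
    · apply max_le hu'.1
      rw [div_le_iff₀ hr0, huv]
      exact mul_le_mul_of_nonneg_left hv'.2 hu0
    · apply le_min hu'.2
      rw [le_div_iff₀ hl0, huv]
      exact mul_le_mul_of_nonneg_left hv'.1 hu0
  have e1 := key u hmemu
  have e2 := key u' hmemu'
  have hu0 : u ≠ 0 := ne_of_gt (lt_of_lt_of_le hl0 hu.1)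
  have hu0' : u' ≠ 0 := ne_of_gt (lt_of_lt_of_le hl0 hu'.1)
  have hv1 : k / u = v := by
    rw [hk, mul_comm, mul_div_assoc, div_self hu0, mul_one]
  have hv2 : k / u' = v' := by
    rw [huv, mul_comm, mul_div_assoc, div_self hu0', mul_one]
  rw [hv1] at e1
  rw [hv2] at e2
  linarith [e1, e2]

end Hyp

section Slice
variable {l : ℝ} {C C' : ℝ → ℝ} (hl0 : 0 < l) (hl6 : l < 1/6)
  (hC : ∀ t ∈ Icc (0:ℝ) 1, HasDerivWithinAt C (C' t) (Icc (0:ℝ) 1) t)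
  (hC' : ContinuousOn C' (Icc 0 1))
  (hU : StrictMonoOn (fun t => t * C' t) (Icc (0:ℝ) 1))
include hl0 hl6 hC hC' hU

lemma slice_lemma {q x₀ : ℝ} (hq : q ∈ Icc (0:ℝ) 1) (hx₀ : x₀ ∈ Icc (0:ℝ) 1)
    (hmin : ∀ x ∈ Icc (0:ℝ) 1, C (x₀*q) - FT l C' x₀ ≤ C (x*q) - FT l C' x) :
    lam l x₀ = q := by
  have hCc : ContinuousOn C (Icc 0 1) := fun u hu => (hC u hu).continuousWithinAt
  -- find xq with lam xq = q by IVT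
  obtain ⟨xq, hxqmem, hxq⟩ : ∃ x ∈ Icc (0:ℝ) 1, lam l x = q := by
    have hc : ContinuousOn (lam l) (Icc 0 1) := (lam_continuous hl0 hl6).continuousOn
    have hsub := intermediate_value_Icc' (zero_le_one) hc
    rw [lam_one hl0 hl6, lam_zero hl0 hl6] at hsub
    obtain ⟨x, hx, hxe⟩ := hsub hq
    exact ⟨x, hx, hxe⟩
  set gg : ℝ → ℝ := fun x => C (x*q) - FT l C' x with hgg
  have hggcont : ContinuousOn gg (Icc 0 1) := by
    apply ContinuousOn.sub
    · apply hCc.comp (by fun_prop)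
      intro x hx
      exact ⟨mul_nonneg hx.1 hq.1, mul_le_one₀ hx.2 hq.1 hq.2⟩
    · exact (continuous_FT hl0 hl6 hC').continuousOn
  have hd : ∀ x ∈ Ioo (0:ℝ) 1, HasDerivAt gg (q * C' (x*q) - phiT l C' x) x := by
    intro x hx
    have hFd := hasDerivAt_FT hl0 hl6 hC' x
    rcases eq_or_lt_of_le hq.1 with hq0 | hq0
    · have : (fun x : ℝ => C (x*q)) = fun _ : ℝ => C 0 := by
        funext y; rw [← hq0]; norm_num
      have hcd : HasDerivAt (fun x : ℝ => C (x*q)) 0 x := by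
        rw [this]; exact hasDerivAt_const x (C 0)
      have : q * C' (x*q) = 0 := by rw [← hq0]; ring
      rw [hgg]
      exact this ▸ (hcd.sub hFd)
    · have hxq' : x*q ∈ Ioo (0:ℝ) 1 := by
        constructor
        · exact mul_pos hx.1 hq0
        · calc x*q < 1*q := by exact mul_lt_mul_of_pos_right hx.2 hq0
            _ ≤ 1 := by rw [one_mul]; exact hq.2
      have hCd : HasDerivAt C (C' (x*q)) (x*q) :=
        (hC _ (Ioo_subset_Icc_self hxq')).hasDerivAt
          (Icc_mem_nhds hxq'.1 hxq'.2)
      have hlin : HasDerivAt (fun y : ℝ => y * q) q x := by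
        simpa using (hasDerivAt_id x).mul_const q
      have hcomp : HasDerivAt (fun y : ℝ => C (y*q)) (C' (x*q) * q) x :=
        hCd.comp x hlin
      have : C' (x*q) * q = q * C' (x*q) := mul_comm _ _
      exact (this ▸ hcomp).sub hFd
  have hderiv_neg : ∀ x ∈ Ioo 0 xq, deriv gg x < 0 := by
    intro x hx
    have hx1 : x ∈ Ioo (0:ℝ) 1 := ⟨hx.1, lt_of_lt_of_le hx.2 hxqmem.2⟩
    have hxmem : x ∈ Icc (0:ℝ) 1 := Ioo_subset_Icc_self hx1
    rw [(hd x hx1).deriv]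
    have hlamgt : q < lam l x := by
      rw [← hxq]
      exact lam_strictAntiOn hl0 hl6 hxmem hxqmem hx.2
    have h1 : x*q < x*(lam l x) := mul_lt_mul_of_pos_left hlamgt hx.1
    have hm1 : x*q ∈ Icc (0:ℝ) 1 :=
      ⟨mul_nonneg hxmem.1 hq.1, by nlinarith [hxmem.2, hq.2, hq.1, hxmem.1]⟩
    have hm2 : x*(lam l x) ∈ Icc (0:ℝ) 1 := theta_mem hl0 hl6 hxmem
    have hUlt := hU hm1 hm2 h1
    simp only at hUlt
    have : q * C' (x*q) < lam l x * C' (x * lam l x) := by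
      nlinarith [hUlt, hx.1]
    rw [phiT_eq hl0 hl6 hxmem]
    linarith
  have hderiv_pos : ∀ x ∈ Ioo xq 1, 0 < deriv gg x := by
    intro x hx
    have hx1 : x ∈ Ioo (0:ℝ) 1 := ⟨lt_of_le_of_lt hxqmem.1 hx.1, hx.2⟩
    have hxmem : x ∈ Icc (0:ℝ) 1 := Ioo_subset_Icc_self hx1
    rw [(hd x hx1).deriv]
    have hlamlt : lam l x < q := by
      rw [← hxq]
      exact lam_strictAntiOn hl0 hl6 hxqmem hxmem hx.1
    have h1 : x*(lam l x) < x*q := mul_lt_mul_of_pos_left hlamlt hx1.1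
    have hm1 : x*q ∈ Icc (0:ℝ) 1 :=
      ⟨mul_nonneg hxmem.1 hq.1, by nlinarith [hxmem.2, hq.2, hq.1, hxmem.1]⟩
    have hm2 : x*(lam l x) ∈ Icc (0:ℝ) 1 := theta_mem hl0 hl6 hxmem
    have hUlt := hU hm2 hm1 h1
    simp only at hUlt
    have : lam l x * C' (x * lam l x) < q * C' (x*q) := by
      nlinarith [hUlt, hx1.1]
    rw [phiT_eq hl0 hl6 hxmem]
    linarith
  have hanti : StrictAntiOn gg (Icc 0 xq) := by
    apply strictAntiOn_of_deriv_neg (convex_Icc _ _)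
      (hggcont.mono (Icc_subset_Icc le_rfl hxqmem.2))
    rw [interior_Icc]
    exact hderiv_neg
  have hmono : StrictMonoOn gg (Icc xq 1) := by
    apply strictMonoOn_of_deriv_pos (convex_Icc _ _)
      (hggcont.mono (Icc_subset_Icc hxqmem.1 le_rfl))
    rw [interior_Icc]
    exact hderiv_pos
  rcases lt_trichotomy x₀ xq with h | h | h
  · exfalso
    have h1 := hanti ⟨hx₀.1, h.le⟩ ⟨hx₀.1.trans h.le, le_rfl⟩ h
    have h2 := hmin xq hxqmem
    simp only [hgg] at h1
    linarith
  · rw [h]; exact hxq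
  · exfalso
    have h1 := hmono ⟨le_rfl, hxqmem.2⟩ ⟨h.le, hx₀.2⟩ h
    have h2 := hmin xq hxqmem
    simp only [hgg] at h1
    linarith

end Slice

section Classify
variable {l : ℝ} (hl0 : 0 < l) (hl6 : l < 1/6)
include hl0 hl6

omit hl0 hl6 in
lemma thetaA_mono {a b : ℝ} (ha0 : 0 ≤ a) (hab : a < b) (hb6 : b < 1/6) :
    a*(1-2*a)^2 < b*(1-2*b)^2 := by
  nlinarith [mul_pos (sub_pos.2 hab)
      (mul_pos (by linarith : (0:ℝ) < 1-3*a-3*b) (by linarith : (0:ℝ) < 1-a-b)),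
    mul_nonneg (sub_pos.2 hab).le (sq_nonneg (a-b))]

omit hl0 hl6 in
lemma thetaB_anti {a b : ℝ} (ha : 2/3 < a) (hab : a < b) (hb1 : b ≤ 1) :
    b^2*(1-b) < a^2*(1-a) := by
  have h2 : (0:ℝ) < 3*(a+b)*(a+b) - 4*(a+b) := by nlinarith
  nlinarith [mul_pos (sub_pos.2 hab) h2,
    mul_nonneg (sub_pos.2 hab).le (sq_nonneg (a-b))]

lemma theta_mid {w : ℝ} (h1 : l ≤ w) (h2 : w ≤ 1-2*l) :
    w * lam l w = l*(1-2*l)^2 := by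
  have hw0 : 0 < w := lt_of_lt_of_le hl0 h1
  rw [lam_mid hl0 hl6 h1 h2, mul_div_cancel₀ _ (ne_of_gt hw0)]

lemma theta_left {w : ℝ} (h0 : 0 ≤ w) (h1 : w < l) :
    w * lam l w < l*(1-2*l)^2 := by
  rw [lam_lt hl0 hl6 h1]
  exact thetaA_mono h0 h1 hl6

lemma theta_right {w : ℝ} (h1 : 1-2*l < w) (h2 : w ≤ 1) :
    w * lam l w < l*(1-2*l)^2 := by
  rw [lam_ge hl0 hl6 h1.le]
  have hr : (2:ℝ)/3 < 1-2*l := by linarith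
  have := thetaB_anti hr h1 h2
  nlinarith [this]

lemma big_inj {a b : ℝ} (ha1 : 1-2*l < a) (ha2 : a ≤ 1) (hb1 : 1-2*l < b) (hb2 : b ≤ 1)
    (h : a * lam l a = b * lam l b) : a = b := by
  rw [lam_ge hl0 hl6 ha1.le, lam_ge hl0 hl6 hb1.le] at h
  have hr : (2:ℝ)/3 < 1-2*l := by linarith
  rcases lt_trichotomy a b with hab | hab | hab
  · exfalso; have := thetaB_anti (lt_trans hr ha1) hab hb2; nlinarith
  · exact hab
  · exfalso; have := thetaB_anti (lt_trans hr hb1) hab ha2; nlinarith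

lemma classify {x y z : ℝ} (hx : x ∈ Icc (0:ℝ) 1) (hy : y ∈ Icc (0:ℝ) 1)
    (hz : z ∈ Icc (0:ℝ) 1)
    (e1 : lam l x = y*z) (e2 : lam l y = x*z) (e3 : lam l z = x*y) :
    (x, y, z) ∈ Mset l := by
  have hr2 : (2:ℝ)/3 < 1-2*l := by linarith
  set c : ℝ := l*(1-2*l)^2 with hc
  -- theta equalities
  have t1 : x * lam l x = x*y*z := by rw [e1]; ring
  have t2 : y * lam l y = x*y*z := by rw [e2]; ring
  have t3 : z * lam l z = x*y*z := by rw [e3]; ring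
  -- if some coordinate is in the middle band, all are
  have hmidall : (l ≤ x ∧ x ≤ 1-2*l) ∨ (l ≤ y ∧ y ≤ 1-2*l) ∨ (l ≤ z ∧ z ≤ 1-2*l) →
      (x, y, z) ∈ Mset l := by
    intro h
    have hPc : x*y*z = c := by
      rcases h with h | h | h
      · rw [← t1, theta_mid hl0 hl6 h.1 h.2]
      · rw [← t2, theta_mid hl0 hl6 h.1 h.2]
      · rw [← t3, theta_mid hl0 hl6 h.1 h.2]
    have key : ∀ w ∈ Icc (0:ℝ) 1, w * lam l w = c → l ≤ w ∧ w ≤ 1-2*l := by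
      intro w hw hwc
      constructor
      · by_contra hcon
        push_neg at hcon
        have := theta_left hl0 hl6 hw.1 hcon
        rw [hwc] at this; exact lt_irrefl _ this
      · by_contra hcon
        push_neg at hcon
        have := theta_right hl0 hl6 hcon hw.2
        rw [hwc] at this; exact lt_irrefl _ this
    have kx := key x hx (by rw [t1, hPc])
    have ky := key y hy (by rw [t2, hPc])
    have kz := key z hz (by rw [t3, hPc])
    exact Or.inr ⟨kx.1, kx.2, ky.1, ky.2, kz.1, kz.2, hPc⟩
  -- two-small contradiction
  have twoL : ∀ a b d : ℝ, a < l → b < l → 0 ≤ b → 0 ≤ d → d ≤ 1 →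
      lam l a = b*d → False := by
    intro a b d hal hbl hb0 hd0 hd1 he
    rw [lam_lt hl0 hl6 hal] at he
    nlinarith [mul_le_of_le_one_right hb0 hd1]
  rcases le_or_gt l x with hx1 | hx1
  · rcases le_or_gt x (1-2*l) with hx2 | hx2
    · exact hmidall (Or.inl ⟨hx1, hx2⟩)
    · -- x big
      rcases le_or_gt l y with hy1 | hy1
      · rcases le_or_gt y (1-2*l) with hy2 | hy2
        · exact hmidall (Or.inr (Or.inl ⟨hy1, hy2⟩))
        · -- x, y big
          rcases le_or_gt l z with hz1 | hz1
          · rcases le_or_gt z (1-2*l) with hz2 | hz2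
            · exact hmidall (Or.inr (Or.inr ⟨hz1, hz2⟩))
            · -- all big : contradiction
              exfalso
              rw [lam_ge hl0 hl6 hz2.le] at e3
              nlinarith [hx.2, hy.2, hz.2]
          · -- z small, x y big : Mz case
            have hxy : x = y := big_inj hl0 hl6 hx2 hx.2 hy2 hy.2 (by rw [t1, t2])
            rw [lam_lt hl0 hl6 hz1] at e3
            have h9 : (1-2*z - x)*(1-2*z + x) = 0 := by
              rw [← hxy] at e3
              linear_combination e3
            have hxz : x = 1-2*z := by
              rcases mul_eq_zero.1 h9 with h | h
              · linarith
              · exfalso; nlinarith [hx.1]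
            refine Or.inl ⟨z, hz.1, hz1.le, Or.inr (Or.inr ?_)⟩
            rw [Prod.ext_iff, Prod.ext_iff]
            exact ⟨by simp [← hxz], by simp [← hxz, ← hxy], rfl⟩
      · -- y small
        rcases le_or_gt l z with hz1 | hz1
        · rcases le_or_gt z (1-2*l) with hz2 | hz2
          · exact hmidall (Or.inr (Or.inr ⟨hz1, hz2⟩))
          · -- y small, x z big : My case
            have hxz : x = z := big_inj hl0 hl6 hx2 hx.2 hz2 hz.2 (by rw [t1, t3])
            rw [lam_lt hl0 hl6 hy1] at e2
            have h9 : (1-2*y - x)*(1-2*y + x) = 0 := by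
              rw [← hxz] at e2
              linear_combination e2
            have hxy : x = 1-2*y := by
              rcases mul_eq_zero.1 h9 with h | h
              · linarith
              · exfalso; nlinarith [hx.1]
            refine Or.inl ⟨y, hy.1, hy1.le, Or.inr (Or.inl ?_)⟩
            rw [Prod.ext_iff, Prod.ext_iff]
            exact ⟨by simp [← hxy], rfl, by simp [← hxy, ← hxz]⟩
        · -- y, z small : contradiction via lam y = x*z
          exact absurd (twoL y z x hy1 hz1 hz.1 hx.1 hx.2 (by rw [e2]; ring)) id
  · -- x small
    rcases le_or_gt l y with hy1 | hy1
    · rcases le_or_gt y (1-2*l) with hy2 | hy2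
      · exact hmidall (Or.inr (Or.inl ⟨hy1, hy2⟩))
      · -- x small, y big
        rcases le_or_gt l z with hz1 | hz1
        · rcases le_or_gt z (1-2*l) with hz2 | hz2
          · exact hmidall (Or.inr (Or.inr ⟨hz1, hz2⟩))
          · -- x small, y z big : Mx case
            have hyz : y = z := big_inj hl0 hl6 hy2 hy.2 hz2 hz.2 (by rw [t2, t3])
            rw [lam_lt hl0 hl6 hx1] at e1
            have h9 : (1-2*x - y)*(1-2*x + y) = 0 := by
              rw [← hyz] at e1
              linear_combination e1
            have hxy : y = 1-2*x := by
              rcases mul_eq_zero.1 h9 with h | h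
              · linarith
              · exfalso; nlinarith [hy.1]
            refine Or.inl ⟨x, hx.1, hx1.le, Or.inl ?_⟩
            rw [Prod.ext_iff, Prod.ext_iff]
            exact ⟨rfl, by simp [← hxy], by simp [← hxy, ← hyz]⟩
        · -- x, z small
          exact absurd (twoL x z y hx1 hz1 hz.1 hy.1 hy.2 (by rw [e1]; ring)) id
    · -- x, y small
      exact absurd (twoL x y z hx1 hy1 hy.1 hz.1 hz.2 (by rw [e1])) id

end Classify

section EqM
variable {l : ℝ} {C C' : ℝ → ℝ} (hl0 : 0 < l) (hl6 : l < 1/6)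
  (hC : ∀ t ∈ Icc (0:ℝ) 1, HasDerivWithinAt C (C' t) (Icc (0:ℝ) 1) t)
  (hC' : ContinuousOn C' (Icc 0 1))
include hl0 hl6

lemma Mset_sub_cube {p : ℝ × ℝ × ℝ} (hp : p ∈ Mset l) :
    p.1 ∈ Icc (0:ℝ) 1 ∧ p.2.1 ∈ Icc (0:ℝ) 1 ∧ p.2.2 ∈ Icc (0:ℝ) 1 := by
  rcases hp with ⟨t, ht0, htl, hcase⟩ | ⟨h1, h2, h3, h4, h5, h6, _⟩
  · have h1 : t ∈ Icc (0:ℝ) 1 := ⟨ht0, by linarith⟩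
    have h2 : 1-2*t ∈ Icc (0:ℝ) 1 := ⟨by linarith, by linarith⟩
    rcases hcase with h | h | h <;> rw [h] <;> exact ⟨by assumption, by assumption, by assumption⟩
  · refine ⟨⟨?_, ?_⟩, ⟨?_, ?_⟩, ⟨?_, ?_⟩⟩ <;> linarith

include hC hC'

lemma eqM {p : ℝ × ℝ × ℝ} (hp : p ∈ Mset l) :
    FT l C' p.1 + FT l C' p.2.1 + FT l C' p.2.2 =
      C (p.1 * p.2.1 * p.2.2) - (C 0 - 2 * FT l C' 1) := by
  rcases hp with ⟨t, ht0, htl, hcase⟩ | ⟨h1, h2, h3, h4, h5, h6, h7⟩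
  · have hpath := path_const hl0 hl6 hC hC' (⟨ht0, htl⟩ : t ∈ Icc 0 l)
    rcases hcase with h | h | h <;> rw [h] <;> simp only
    · rw [show t*(1-2*t)*(1-2*t) = t*(1-2*t)^2 from by ring]
      linarith
    · rw [show (1-2*t)*t*(1-2*t) = t*(1-2*t)^2 from by ring]
      linarith
    · rw [show (1-2*t)*(1-2*t)*t = t*(1-2*t)^2 from by ring]
      linarith
  · obtain ⟨x, y, z⟩ := p
    simp only at h1 h2 h3 h4 h5 h6 h7 ⊢
    have hr0 : (0:ℝ) < 1-2*l := by linarith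
    have hz0 : 0 < z := lt_of_lt_of_le hl0 h5
    have hxy0 : 0 ≤ x*y := mul_nonneg (by linarith) (by linarith)
    set x1 : ℝ := x*y/(1-2*l) with hx1def
    have hx1mem : x1 ∈ Icc l (1-2*l) := by
      constructor
      · rw [hx1def, le_div_iff₀ hr0]
        nlinarith [h7, h6, hxy0]
      · rw [hx1def, div_le_iff₀ hr0]
        nlinarith [h7, h5, hxy0]
    have hrmem : (1-2*l) ∈ Icc l (1-2*l) := ⟨by linarith, le_rfl⟩
    have hlmem : l ∈ Icc l (1-2*l) := ⟨le_rfl, by linarith⟩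
    have e1 : FT l C' x + FT l C' y = FT l C' x1 + FT l C' (1-2*l) :=
      FT_hyp hl0 hl6 hC' ⟨h1, h2⟩ ⟨h3, h4⟩ hx1mem hrmem
        (by rw [hx1def]; field_simp)
    have e2 : FT l C' x1 + FT l C' z = FT l C' l + FT l C' (1-2*l) :=
      FT_hyp hl0 hl6 hC' hx1mem ⟨h5, h6⟩ hlmem hrmem
        (by rw [hx1def]; field_simp; nlinarith [h7])
    have hpath := path_const hl0 hl6 hC hC' (⟨hl0.le, le_rfl⟩ : l ∈ Icc 0 l)
    rw [h7]
    linarith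

end EqM

/-- For constants with `Cx + Cy + Cz = C(0) − 2∫₀¹ λ(t)C'(tλ(t)) dt` the shifted potentials
satisfy `(f̂(x)+Cx) + (f̂(y)+Cy) + (f̂(z)+Cz) ≤ C(xyz)` on `[0,1]³`, with equality on `M`. -/
theorem dual_inequality (C C' : ℝ → ℝ)
    (hC : ∀ t ∈ Set.Icc (0 : ℝ) 1, HasDerivWithinAt C (C' t) (Set.Icc (0 : ℝ) 1) t)
    (hC' : ContinuousOn C' (Set.Icc (0 : ℝ) 1))
    (hU : StrictMonoOn (fun t => t * C' t) (Set.Icc (0 : ℝ) 1))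
    (l : ℝ) (hl : l ∈ Set.Ioo (0 : ℝ) (1/6))
    (Cx Cy Cz : ℝ)
    (hsum : Cx + Cy + Cz = C 0 - 2 * ∫ t in (0 : ℝ)..1, lam l t * C' (t * lam l t)) :
    (∀ x ∈ Set.Icc (0 : ℝ) 1, ∀ y ∈ Set.Icc (0 : ℝ) 1, ∀ z ∈ Set.Icc (0 : ℝ) 1,
      (fhat l C' x + Cx) + (fhat l C' y + Cy) + (fhat l C' z + Cz) ≤ C (x * y * z)) ∧
    (∀ p ∈ Mset l,
      (fhat l C' p.1 + Cx) + (fhat l C' p.2.1 + Cy) + (fhat l C' p.2.2 + Cz) =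
        C (p.1 * p.2.1 * p.2.2)) := by
  obtain ⟨hl0, hl6⟩ := hl
  have hCc : ContinuousOn C (Icc 0 1) := fun u hu => (hC u hu).continuousWithinAt
  -- the integral in hsum equals FT l C' 1
  have hint : (∫ t in (0 : ℝ)..1, lam l t * C' (t * lam l t)) = FT l C' 1 := by
    rw [show (∫ t in (0 : ℝ)..1, lam l t * C' (t * lam l t)) = fhat l C' 1 from rfl]
    exact fhat_eq_FT hl0 hl6 hC' ⟨zero_le_one, le_rfl⟩
  rw [hint] at hsum
  set K : ℝ := C 0 - 2 * FT l C' 1 with hK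
  constructor
  · -- inequality
    intro x hx y hy z hz
    -- minimize Phi over the cube
    set Phi : ℝ × ℝ × ℝ → ℝ :=
      fun p => C (p.1 * p.2.1 * p.2.2) - FT l C' p.1 - FT l C' p.2.1 - FT l C' p.2.2 with hPhi
    set cube : Set (ℝ × ℝ × ℝ) := Icc 0 1 ×ˢ Icc 0 1 ×ˢ Icc 0 1 with hcube
    have hcompact : IsCompact cube := (isCompact_Icc.prod (isCompact_Icc.prod isCompact_Icc))
    have hne : cube.Nonempty := ⟨(0, 0, 0), by
      refine ⟨⟨le_rfl, zero_le_one⟩, ⟨le_rfl, zero_le_one⟩, ⟨le_rfl, zero_le_one⟩⟩⟩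
    have hmaps : ∀ p ∈ cube, p.1 * p.2.1 * p.2.2 ∈ Icc (0:ℝ) 1 := by
      rintro ⟨a, b, d⟩ ⟨ha, hb, hd⟩
      constructor
      · exact mul_nonneg (mul_nonneg ha.1 hb.1) hd.1
      · simp only at ha hb hd
        nlinarith [ha.1, ha.2, hb.1, hb.2, hd.1, hd.2, mul_nonneg ha.1 hb.1]
    have hcont : ContinuousOn Phi cube := by
      apply ContinuousOn.sub
      apply ContinuousOn.sub
      apply ContinuousOn.sub
      · exact hCc.comp (by fun_prop) hmaps
      · exact ((continuous_FT hl0 hl6 hC').comp continuous_fst).continuousOn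
      · exact ((continuous_FT hl0 hl6 hC').comp (continuous_fst.comp continuous_snd)).continuousOn
      · exact ((continuous_FT hl0 hl6 hC').comp (continuous_snd.comp continuous_snd)).continuousOn
    obtain ⟨p₀, hp₀, hminOn⟩ := hcompact.exists_isMinOn hne hcont
    obtain ⟨x₀, y₀, z₀⟩ := p₀
    have hx₀ : x₀ ∈ Icc (0:ℝ) 1 := hp₀.1
    have hy₀ : y₀ ∈ Icc (0:ℝ) 1 := hp₀.2.1
    have hz₀ : z₀ ∈ Icc (0:ℝ) 1 := hp₀.2.2
    have hminOn' : ∀ p ∈ cube, Phi (x₀, y₀, z₀) ≤ Phi p := fun p hp => hminOn hp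
    -- the three stationarity equations
    have e1 : lam l x₀ = y₀ * z₀ := by
      apply slice_lemma hl0 hl6 hC hC' hU
        (⟨mul_nonneg hy₀.1 hz₀.1, mul_le_one₀ hy₀.2 hz₀.1 hz₀.2⟩ : y₀*z₀ ∈ Icc (0:ℝ) 1) hx₀
      intro u hu
      have h := hminOn' (u, y₀, z₀) ⟨hu, hy₀, hz₀⟩
      simp only [hPhi] at h
      rw [show x₀*y₀*z₀ = x₀*(y₀*z₀) from by ring, show u*y₀*z₀ = u*(y₀*z₀) from by ring] at h
      linarith
    have e2 : lam l y₀ = x₀ * z₀ := by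
      apply slice_lemma hl0 hl6 hC hC' hU
        (⟨mul_nonneg hx₀.1 hz₀.1, mul_le_one₀ hx₀.2 hz₀.1 hz₀.2⟩ : x₀*z₀ ∈ Icc (0:ℝ) 1) hy₀
      intro u hu
      have h := hminOn' (x₀, u, z₀) ⟨hx₀, hu, hz₀⟩
      simp only [hPhi] at h
      rw [show x₀*y₀*z₀ = y₀*(x₀*z₀) from by ring, show x₀*u*z₀ = u*(x₀*z₀) from by ring] at h
      linarith
    have e3 : lam l z₀ = x₀ * y₀ := by
      apply slice_lemma hl0 hl6 hC hC' hU
        (⟨mul_nonneg hx₀.1 hy₀.1, mul_le_one₀ hx₀.2 hy₀.1 hy₀.2⟩ : x₀*y₀ ∈ Icc (0:ℝ) 1) hz₀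
      intro u hu
      have h := hminOn' (x₀, y₀, u) ⟨hx₀, hy₀, hu⟩
      simp only [hPhi] at h
      rw [show x₀*y₀*z₀ = z₀*(x₀*y₀) from by ring, show x₀*y₀*u = u*(x₀*y₀) from by ring] at h
      linarith
    have hmem : (x₀, y₀, z₀) ∈ Mset l := classify hl0 hl6 hx₀ hy₀ hz₀ e1 e2 e3
    have hPhi0 : Phi (x₀, y₀, z₀) = K := by
      have := eqM hl0 hl6 hC hC' hmem
      simp only at this
      simp only [hPhi]
      linarith
    have hineq := hminOn' (x, y, z) ⟨hx, hy, hz⟩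
    rw [hPhi0] at hineq
    simp only [hPhi] at hineq
    rw [fhat_eq_FT hl0 hl6 hC' hx, fhat_eq_FT hl0 hl6 hC' hy, fhat_eq_FT hl0 hl6 hC' hz]
    linarith
  · -- equality on M
    intro p hp
    obtain ⟨hp1, hp2, hp3⟩ := Mset_sub_cube hl0 hl6 hp
    have := eqM hl0 hl6 hC hC' hp
    rw [fhat_eq_FT hl0 hl6 hC' hp1, fhat_eq_FT hl0 hl6 hC' hp2, fhat_eq_FT hl0 hl6 hC' hp3]
    linarith
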